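/- Let d > 1 and 0 ≤ a < 1. Define u₊ = √(4a²d² + (1-a²)²) and w₊ = (-2a²d + u₊ + 2a√(d²(1+a²) - d·u₊))/(1 - a²). Then 4d - w₊ - 1/w₊ = 2(2d - u₊)/(1 - a²) > 0. -/

import Mathlib

theorem stmt5 (d a u wp : ℝ) (hd : 1 < d) (ha : 0 ≤ a) (ha1 : a < 1)
    (hu : u = Real.sqrt (4 * a ^ 2 * d ^ 2 + (1 - a ^ 2) ^ 2))
    (hwp : wp = (-2 * a ^ 2 * d + u + 2 * a * Real.sqrt (d ^ 2 * (1 + a ^ 2) - d * u)) / (1 - a ^ 2))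
    (hwpos : 0 < wp) :
    4 * d - wp - wp⁻¹ = 2 * (2 * d - u) / (1 - a ^ 2) ∧
    0 < 2 * (2 * d - u) / (1 - a ^ 2) := by
  have ha2 : (0:ℝ) < 1 - a ^ 2 := by nlinarith
  have hu0 : 0 ≤ u := hu ▸ Real.sqrt_nonneg _
  have hu2 : u ^ 2 = 4 * a ^ 2 * d ^ 2 + (1 - a ^ 2) ^ 2 := by
    rw [hu, Real.sq_sqrt]; nlinarith
  have hule : u ≤ d * (1 + a ^ 2) := by
    rw [hu]
    have h1 : 4 * a ^ 2 * d ^ 2 + (1 - a ^ 2) ^ 2 ≤ (d * (1 + a ^ 2)) ^ 2 := by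
      nlinarith [mul_nonneg (by nlinarith : (0:ℝ) ≤ d ^ 2 - 1) (sq_nonneg (1 - a ^ 2))]
    calc Real.sqrt (4 * a ^ 2 * d ^ 2 + (1 - a ^ 2) ^ 2) ≤ Real.sqrt ((d * (1 + a ^ 2)) ^ 2) :=
          Real.sqrt_le_sqrt h1
      _ = d * (1 + a ^ 2) := Real.sqrt_sq (by positivity)
  set t := Real.sqrt (d ^ 2 * (1 + a ^ 2) - d * u) with ht
  have ht0 : 0 ≤ t := Real.sqrt_nonneg _
  have ht2 : t ^ 2 = d ^ 2 * (1 + a ^ 2) - d * u := by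
    rw [ht, Real.sq_sqrt]; nlinarith
  have hkey : wp ^ 2 * (1 - a ^ 2) - 2 * (u - 2 * a ^ 2 * d) * wp + (1 - a ^ 2) = 0 := by
    rw [hwp]
    field_simp
    linear_combination (4 * a ^ 2 * ht2 - hu2)
  constructor
  · field_simp
    linear_combination -hkey
  · apply div_pos (by nlinarith) ha2
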